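/- (Porst–Street) Let (L, φ, φ₀) : (C, ⊗, I) ⥤ (D, ⊕, J) be an oplax monoidal functor and let (M, m, e) be a monoid object in C. If the structure morphisms φ₀ : L(I) ⟶ J, φ_{M,M} : L(M ⊗ M) ⟶ L(M) ⊕ L(M), and φ_{M⊗M, M} : L((M ⊗ M) ⊗ M) ⟶ L(M ⊗ M) ⊕ L(M) are invertible, then the triple (L(M), L(m) ∘ (φ_{M,M})⁻¹, L(e) ∘ (φ₀)⁻¹) is a monoid object in D. -/

import Mathlib

open CategoryTheory Functor MonoidalCategory

section Aux

variable {C D : Type*} [Category C] [Category D]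
    [MonoidalCategory C] [MonoidalCategory D]
    (L : C ⥤ D) [L.OplaxMonoidal]

open OplaxMonoidal

lemma aux_left_unit (M : Mon C) [IsIso (η L)] [IsIso (δ L M.X M.X)] :
    ((inv (η L) ≫ L.map (MonObj.one (X := M.X))) ▷ L.obj M.X) ≫
        (inv (δ L M.X M.X) ≫ L.map (MonObj.mul (X := M.X))) = (λ_ (L.obj M.X)).hom := by
  rw [← cancel_epi (λ_ (L.obj M.X)).inv, Iso.inv_hom_id,
    left_unitality L M.X, comp_whiskerRight]
  slice_lhs 3 4 => rw [← comp_whiskerRight, IsIso.hom_inv_id, id_whiskerRight]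
  rw [Category.id_comp]
  slice_lhs 2 3 => rw [δ_natural_left]
  slice_lhs 3 4 => rw [IsIso.hom_inv_id]
  rw [Category.id_comp, ← L.map_comp, ← L.map_comp, MonObj.one_mul M.X, Iso.inv_hom_id, L.map_id]

lemma aux_right_unit (M : Mon C) [IsIso (η L)] [IsIso (δ L M.X M.X)] :
    (L.obj M.X ◁ (inv (η L) ≫ L.map (MonObj.one (X := M.X)))) ≫
        (inv (δ L M.X M.X) ≫ L.map (MonObj.mul (X := M.X))) = (ρ_ (L.obj M.X)).hom := by
  rw [← cancel_epi (ρ_ (L.obj M.X)).inv, Iso.inv_hom_id,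
    right_unitality L M.X, MonoidalCategory.whiskerLeft_comp]
  slice_lhs 3 4 => rw [← MonoidalCategory.whiskerLeft_comp, IsIso.hom_inv_id,
    MonoidalCategory.whiskerLeft_id]
  rw [Category.id_comp]
  slice_lhs 2 3 => rw [δ_natural_right]
  slice_lhs 3 4 => rw [IsIso.hom_inv_id]
  rw [Category.id_comp, ← L.map_comp, ← L.map_comp, MonObj.mul_one M.X, Iso.inv_hom_id, L.map_id]

lemma aux_assoc (M : Mon C) [IsIso (δ L M.X M.X)] [IsIso (δ L (M.X ⊗ M.X) M.X)] :
    ((inv (δ L M.X M.X) ≫ L.map (MonObj.mul (X := M.X))) ▷ L.obj M.X) ≫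
        (inv (δ L M.X M.X) ≫ L.map (MonObj.mul (X := M.X))) =
      (α_ (L.obj M.X) (L.obj M.X) (L.obj M.X)).hom ≫
        (L.obj M.X ◁ (inv (δ L M.X M.X) ≫ L.map (MonObj.mul (X := M.X)))) ≫
        (inv (δ L M.X M.X) ≫ L.map (MonObj.mul (X := M.X))) := by
  have hδ3 : δ L M.X (M.X ⊗ M.X) =
      L.map (α_ M.X M.X M.X).inv ≫ δ L (M.X ⊗ M.X) M.X ≫
        δ L M.X M.X ▷ L.obj M.X ≫ (α_ _ _ _).hom ≫ (L.obj M.X ◁ inv (δ L M.X M.X)) := by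
    rw [← cancel_epi (L.map (α_ M.X M.X M.X).hom), ← L.map_comp_assoc, Iso.hom_inv_id,
      L.map_id, Category.id_comp, ← cancel_mono (L.obj M.X ◁ δ L M.X M.X)]
    simp only [Category.assoc, ← MonoidalCategory.whiskerLeft_comp, IsIso.inv_hom_id,
      MonoidalCategory.whiskerLeft_id, Category.comp_id]
    rw [← associativity]
  have h3 : IsIso (δ L M.X (M.X ⊗ M.X)) := by rw [hδ3]; infer_instance
  have e1 : L.map (MonObj.mul (X := M.X)) ▷ L.obj M.X ≫ inv (δ L M.X M.X) =
      inv (δ L (M.X ⊗ M.X) M.X) ≫ L.map ((MonObj.mul (X := M.X)) ▷ M.X) := by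
    rw [IsIso.eq_inv_comp, ← Category.assoc, δ_natural_left, Category.assoc,
      IsIso.hom_inv_id, Category.comp_id]
  have e2 : L.obj M.X ◁ L.map (MonObj.mul (X := M.X)) ≫ inv (δ L M.X M.X) =
      inv (δ L M.X (M.X ⊗ M.X)) ≫ L.map (M.X ◁ (MonObj.mul (X := M.X))) := by
    rw [IsIso.eq_inv_comp, ← Category.assoc, δ_natural_right, Category.assoc,
      IsIso.hom_inv_id, Category.comp_id]
  have hL : ((inv (δ L M.X M.X) ≫ L.map (MonObj.mul (X := M.X))) ▷ L.obj M.X) ≫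
      (inv (δ L M.X M.X) ≫ L.map (MonObj.mul (X := M.X))) =
      (inv (δ L M.X M.X) ▷ L.obj M.X) ≫ inv (δ L (M.X ⊗ M.X) M.X) ≫
        L.map (((MonObj.mul (X := M.X)) ▷ M.X) ≫ (MonObj.mul (X := M.X))) := by
    rw [comp_whiskerRight, L.map_comp]
    slice_lhs 2 3 => rw [e1]
    simp
  have hR : (L.obj M.X ◁ (inv (δ L M.X M.X) ≫ L.map (MonObj.mul (X := M.X)))) ≫
      (inv (δ L M.X M.X) ≫ L.map (MonObj.mul (X := M.X))) =
      (L.obj M.X ◁ inv (δ L M.X M.X)) ≫ inv (δ L M.X (M.X ⊗ M.X)) ≫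
        L.map ((M.X ◁ (MonObj.mul (X := M.X))) ≫ (MonObj.mul (X := M.X))) := by
    rw [MonoidalCategory.whiskerLeft_comp, L.map_comp]
    slice_lhs 2 3 => rw [e2]
    simp
  have key : (inv (δ L M.X M.X) ▷ L.obj M.X) ≫ inv (δ L (M.X ⊗ M.X) M.X) ≫
      L.map (α_ M.X M.X M.X).hom =
      (α_ (L.obj M.X) (L.obj M.X) (L.obj M.X)).hom ≫ (L.obj M.X ◁ inv (δ L M.X M.X)) ≫
        inv (δ L M.X (M.X ⊗ M.X)) := by
    rw [← cancel_mono (δ L M.X (M.X ⊗ M.X) ≫ (L.obj M.X ◁ δ L M.X M.X))]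
    simp only [Category.assoc, IsIso.inv_hom_id_assoc,
      ← MonoidalCategory.whiskerLeft_comp, IsIso.inv_hom_id,
      MonoidalCategory.whiskerLeft_id, Category.comp_id]
    rw [← associativity, IsIso.inv_hom_id_assoc, ← comp_whiskerRight_assoc,
      IsIso.inv_hom_id, id_whiskerRight, Category.id_comp]
  rw [hL, hR, MonObj.mul_assoc M.X, L.map_comp]
  slice_lhs 1 3 => rw [key]
  simp

end Aux

theorem oplax_image_is_monoid
    {C D : Type*} [Category C] [Category D]
    [MonoidalCategory C] [MonoidalCategory D]
    (L : C ⥤ D) [L.OplaxMonoidal] (M : Mon C)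
    [IsIso (OplaxMonoidal.η L)]
    [IsIso (OplaxMonoidal.δ L M.X M.X)]
    [IsIso (OplaxMonoidal.δ L (M.X ⊗ M.X) M.X)] :
    ((inv (OplaxMonoidal.η L) ≫ L.map (MonObj.one (X := M.X))) ▷ L.obj M.X) ≫
        (inv (OplaxMonoidal.δ L M.X M.X) ≫ L.map (MonObj.mul (X := M.X))) = (λ_ (L.obj M.X)).hom ∧
    (L.obj M.X ◁ (inv (OplaxMonoidal.η L) ≫ L.map (MonObj.one (X := M.X)))) ≫
        (inv (OplaxMonoidal.δ L M.X M.X) ≫ L.map (MonObj.mul (X := M.X))) = (ρ_ (L.obj M.X)).hom ∧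
    ((inv (OplaxMonoidal.δ L M.X M.X) ≫ L.map (MonObj.mul (X := M.X))) ▷ L.obj M.X) ≫
        (inv (OplaxMonoidal.δ L M.X M.X) ≫ L.map (MonObj.mul (X := M.X))) =
      (α_ (L.obj M.X) (L.obj M.X) (L.obj M.X)).hom ≫
        (L.obj M.X ◁ (inv (OplaxMonoidal.δ L M.X M.X) ≫ L.map (MonObj.mul (X := M.X)))) ≫
        (inv (OplaxMonoidal.δ L M.X M.X) ≫ L.map (MonObj.mul (X := M.X))) := by
  
  exact ⟨aux_left_unit L M, aux_right_unit L M, aux_assoc L M⟩
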